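/- The class of strongly Gorenstein projective R-modules is closed under arbitrary direct sums. -/

import Mathlib

universe u

open LinearMap DirectSum

section Defs

variable (R : Type u) [CommRing R]

/-- `Ext¹_R(M, Q) = 0`, expressed by the splitting of all extensions of `M` by `Q`. -/
def Ext1Zero (M Q : Type u) [AddCommGroup M] [Module R M] [AddCommGroup Q] [Module R Q] :
    Prop :=
  ∀ (E : ModuleCat.{u} R) (i : Q →ₗ[R] E) (p : E →ₗ[R] M),
    Function.Injective i → Function.Surjective p → LinearMap.range i = LinearMap.ker p →
      ∃ s : M →ₗ[R] E, p ∘ₗ s = LinearMap.id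

/-- `Tor₁^R(M, N) = 0`, expressed via flat presentations of `N`:
for every surjection `p : F ↠ N` with `F` flat, `ker p ⊗ M → F ⊗ M` is injective. -/
def Tor1Zero (M N : Type u) [AddCommGroup M] [Module R M] [AddCommGroup N] [Module R N] :
    Prop :=
  ∀ (F : ModuleCat.{u} R), Module.Flat R F →
    ∀ p : F →ₗ[R] N, Function.Surjective p →
      Function.Injective (LinearMap.rTensor M (LinearMap.ker p).subtype)

/-- `M` is strongly Gorenstein projective: there is an exact complex
`⋯ → P → P → P → ⋯` with a single projective `P` and single differential `f`,
which stays exact under `Hom(-, Q)` for every projective `Q`, and `M ≅ Im f`. -/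
def IsSGProjective (M : Type u) [AddCommGroup M] [Module R M] : Prop :=
  ∃ P : ModuleCat.{u} R, Module.Projective R P ∧
    ∃ f : P →ₗ[R] P, f ∘ₗ f = 0 ∧ LinearMap.ker f = LinearMap.range f ∧
      Nonempty (M ≃ₗ[R] LinearMap.range f) ∧
      ∀ Q : ModuleCat.{u} R, Module.Projective R Q →
        ∀ g : P →ₗ[R] Q, g ∘ₗ f = 0 → ∃ h : P →ₗ[R] Q, g = h ∘ₗ f

/-- `M` is strongly Gorenstein flat: there is an exact complex
`⋯ → F → F → F → ⋯` with a single flat `F` and single differential `f`,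
which stays exact under `- ⊗ I` for every injective `I`, and `M ≅ Im f`. -/
def IsSGFlat (M : Type u) [AddCommGroup M] [Module R M] : Prop :=
  ∃ F : ModuleCat.{u} R, Module.Flat R F ∧
    ∃ f : F →ₗ[R] F, f ∘ₗ f = 0 ∧ LinearMap.ker f = LinearMap.range f ∧
      Nonempty (M ≃ₗ[R] LinearMap.range f) ∧
      ∀ I : ModuleCat.{u} R, Module.Injective R I →
        LinearMap.ker (LinearMap.rTensor I f) = LinearMap.range (LinearMap.rTensor I f)

/-- `M` is Gorenstein projective: it is a syzygy of a totally acyclic complex of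
projective modules. -/
def IsGProjective (M : Type u) [AddCommGroup M] [Module R M] : Prop :=
  ∃ (P : ℤ → ModuleCat.{u} R) (d : ∀ i : ℤ, P (i + 1) →ₗ[R] P i),
    (∀ i, Module.Projective R (P i)) ∧
    (∀ i, d i ∘ₗ d (i + 1) = 0) ∧
    (∀ i, LinearMap.ker (d i) = LinearMap.range (d (i + 1))) ∧
    Nonempty (M ≃ₗ[R] LinearMap.range (d 0)) ∧
    ∀ Q : ModuleCat.{u} R, Module.Projective R Q →
      ∀ (i : ℤ) (g : P (i + 1) →ₗ[R] Q), g ∘ₗ d (i + 1) = 0 →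
        ∃ h : P i →ₗ[R] Q, g = h ∘ₗ d i

/-- `M` is Gorenstein flat: it is a syzygy of an exact complex of flat modules
which stays exact under `- ⊗ I` for every injective `I`. -/
def IsGFlat (M : Type u) [AddCommGroup M] [Module R M] : Prop :=
  ∃ (F : ℤ → ModuleCat.{u} R) (d : ∀ i : ℤ, F (i + 1) →ₗ[R] F i),
    (∀ i, Module.Flat R (F i)) ∧
    (∀ i, d i ∘ₗ d (i + 1) = 0) ∧
    (∀ i, LinearMap.ker (d i) = LinearMap.range (d (i + 1))) ∧
    Nonempty (M ≃ₗ[R] LinearMap.range (d 0)) ∧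
    ∀ I : ModuleCat.{u} R, Module.Injective R I →
      ∀ i : ℤ, LinearMap.ker (LinearMap.rTensor I (d i)) =
        LinearMap.range (LinearMap.rTensor I (d (i + 1)))

/-- A class of `R`-modules is projectively resolving if it contains the projectives and,
in every short exact sequence `0 → A → B → C → 0` with `C` in the class, `A` is in the
class iff `B` is. -/
def ProjResolving (X : ModuleCat.{u} R → Prop) : Prop :=
  (∀ P : ModuleCat.{u} R, Module.Projective R P → X P) ∧
  ∀ (A B C : ModuleCat.{u} R) (i : A →ₗ[R] B) (p : B →ₗ[R] C),
    Function.Injective i → Function.Surjective p → LinearMap.range i = LinearMap.ker p →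
      X C → (X A ↔ X B)

/-- Gorenstein projective dimension at most `n`. -/
def GpdLE : ℕ → ModuleCat.{u} R → Prop
  | 0, M => IsGProjective R M
  | n + 1, M => ∃ (G : ModuleCat.{u} R) (p : G →ₗ[R] M),
      IsGProjective R G ∧ Function.Surjective p ∧ GpdLE n (ModuleCat.of R (LinearMap.ker p))

/-- Gorenstein flat dimension at most `n`. -/
def GfdLE : ℕ → ModuleCat.{u} R → Prop
  | 0, M => IsGFlat R M
  | n + 1, M => ∃ (G : ModuleCat.{u} R) (p : G →ₗ[R] M),
      IsGFlat R G ∧ Function.Surjective p ∧ GfdLE n (ModuleCat.of R (LinearMap.ker p))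

/-- Flat dimension at most `n`. -/
def FlatDimLE : ℕ → ModuleCat.{u} R → Prop
  | 0, M => Module.Flat R M
  | n + 1, M => ∃ (G : ModuleCat.{u} R) (p : G →ₗ[R] M),
      Module.Flat R G ∧ Function.Surjective p ∧ FlatDimLE n (ModuleCat.of R (LinearMap.ker p))

/-- Projective dimension at most `n`. -/
def ProjDimLE : ℕ → ModuleCat.{u} R → Prop
  | 0, M => Module.Projective R M
  | n + 1, M => ∃ (G : ModuleCat.{u} R) (p : G →ₗ[R] M),
      Module.Projective R G ∧ Function.Surjective p ∧
        ProjDimLE n (ModuleCat.of R (LinearMap.ker p))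

/-- `R` is a coherent ring: every finitely generated ideal is finitely presented. -/
def IsCoherent : Prop :=
  ∀ I : Ideal R, I.FG → Module.FinitePresentation R I

end Defs

/-- The class of strongly Gorenstein projective `R`-modules is closed under
arbitrary direct sums. -/
theorem stmt3 (R : Type u) [CommRing R] (ι : Type u) (M : ι → ModuleCat.{u} R)
    (h : ∀ i, IsSGProjective R (M i)) :
    IsSGProjective R (⨁ i, (M i : Type u)) := by
  classical
  choose P hP f hff hkr hne hlift using h
  refine ⟨ModuleCat.of R (⨁ i, (P i : Type u)),
    (inferInstance : Module.Projective R (Π₀ i, (P i : Type u))), ?_⟩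
  set F : (⨁ i, (P i : Type u)) →ₗ[R] (⨁ i, (P i : Type u)) :=
    DFinsupp.mapRange.linearMap f with hF
  have hFapply : ∀ (x : ⨁ i, (P i : Type u)) (i : ι), F x i = f i (x i) := by
    intro x i
    exact DFinsupp.mapRange_apply (fun i => f i) (fun i => (f i).map_zero) x i
  have hFF : F ∘ₗ F = 0 := by
    refine LinearMap.ext fun x => ?_
    refine DFinsupp.ext fun i => ?_
    simp only [LinearMap.comp_apply, LinearMap.zero_apply, hFapply]
    exact LinearMap.ext_iff.mp (hff i) (x i)
  have hFsingle : ∀ (i : ι) (x : (P i : Type u)),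
      F (DFinsupp.single i x) = DFinsupp.single i (f i x) := by
    intro i x
    exact DFinsupp.mapRange_single (f := fun i => f i) (hf := fun i => (f i).map_zero)
  have hKR : LinearMap.ker F = LinearMap.range F := by
    apply le_antisymm
    · intro x hx
      have hxi : ∀ i, x i ∈ LinearMap.range (f i) := by
        intro i
        rw [← hkr i]
        have := DFinsupp.ext_iff.mp (LinearMap.mem_ker.mp hx) i
        simpa [hFapply] using this
      have hx' : x = x.sum fun i xi => DFinsupp.single i xi := (DFinsupp.sum_single (f := x)).symm
      rw [hx']
      refine Submodule.dfinsuppSum_mem _ _ _ fun i _ => ?_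
      obtain ⟨y, hy⟩ := hxi i
      exact ⟨DFinsupp.single i y, by rw [hFsingle, hy]⟩
    · rintro _ ⟨y, rfl⟩
      exact LinearMap.mem_ker.mpr (LinearMap.ext_iff.mp hFF y)
  refine ⟨F, hFF, hKR, ?_, ?_⟩
  · -- equivalence
    have e1 : (⨁ i, (M i : Type u)) ≃ₗ[R] ⨁ i, (LinearMap.range (f i) : Type u) :=
      DFinsupp.mapRange.linearEquiv fun i => (hne i).some
    set ψ : (⨁ i, (LinearMap.range (f i) : Type u)) →ₗ[R] (⨁ i, (P i : Type u)) :=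
      DFinsupp.mapRange.linearMap fun i => (LinearMap.range (f i)).subtype with hψ
    have hψapply : ∀ (x : ⨁ i, (LinearMap.range (f i) : Type u)) (i : ι),
        ψ x i = (x i : (P i : Type u)) := by
      intro x i
      exact DFinsupp.mapRange_apply (fun i => (LinearMap.range (f i)).subtype)
        (fun i => map_zero _) x i
    have hmem : ∀ x, ψ x ∈ LinearMap.range F := by
      intro x
      rw [← hKR]
      refine LinearMap.mem_ker.mpr (DFinsupp.ext fun i => ?_)
      have : (x i : (P i : Type u)) ∈ LinearMap.ker (f i) := by
        rw [hkr i]; exact (x i).2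
      simpa [hFapply, hψapply] using this
    set ψ' := LinearMap.codRestrict (LinearMap.range F) ψ hmem with hψ'
    have hinj : Function.Injective ψ' := by
      intro a b hab
      refine DFinsupp.ext fun i => Subtype.ext ?_
      have : ψ a = ψ b := congrArg Subtype.val hab
      rw [← hψapply a i, ← hψapply b i, this]
    have hsurj : Function.Surjective ψ' := by
      rintro ⟨z, hz⟩
      have hzk : z ∈ LinearMap.ker F := by rw [hKR]; exact hz
      have hzi : ∀ i, z i ∈ LinearMap.range (f i) := by
        intro i
        rw [← hkr i]
        have := DFinsupp.ext_iff.mp (LinearMap.mem_ker.mp hzk) i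
        simpa [hFapply] using this
      refine ⟨DFinsupp.mk z.support fun i => ⟨z i.1, hzi i.1⟩, ?_⟩
      refine Subtype.ext (DFinsupp.ext fun i => ?_)
      rw [hψ']
      show ψ _ i = z i
      rw [hψapply]
      by_cases hi : i ∈ z.support
      · rw [DFinsupp.mk_apply, dif_pos hi]
      · rw [DFinsupp.mk_apply, dif_neg hi]
        simpa using (DFinsupp.notMem_support_iff.mp hi).symm
    exact ⟨e1.trans (LinearEquiv.ofBijective ψ' ⟨hinj, hsurj⟩)⟩
  · -- lifting property
    intro Q hQ g hg
    have hFls : ∀ i : ι, F ∘ₗ DFinsupp.lsingle i = DFinsupp.lsingle i ∘ₗ f i := by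
      intro i; ext x : 1; exact hFsingle i x
    set ls : ∀ i : ι, ((P i : Type u) →ₗ[R] ⨁ i, (P i : Type u)) :=
      fun i => DirectSum.lof R ι (fun i => ((P i : Type u))) i with hls
    have hls2 : ∀ (i : ι) (x : (P i : Type u)), ls i x = DFinsupp.single i x :=
      fun i x => DFinsupp.single_eq_of_sigma_eq rfl
    have hkey : ∀ i : ι, (g ∘ₗ ls i) ∘ₗ f i = 0 := by
      intro i
      have : F ∘ₗ ls i = ls i ∘ₗ f i := by
        ext x
        simp only [LinearMap.comp_apply, hls2, hFsingle]
      rw [LinearMap.comp_assoc, ← this, ← LinearMap.comp_assoc, hg]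
      simp
    choose hcomp hspec using fun i => hlift i Q hQ (g ∘ₗ ls i) (hkey i)
    refine ⟨DFinsupp.lsum ℕ hcomp, ?_⟩
    refine DFinsupp.lhom_ext fun i x => ?_
    have h1 : g (ls i x) = hcomp i (f i x) := LinearMap.ext_iff.mp (hspec i) x
    show g (ls i x) = DFinsupp.lsum ℕ hcomp (F (ls i x))
    rw [h1, hls2, hFsingle, DFinsupp.lsum_single]
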